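/- Let H be an FH-algebra over a commutative ring k with FH-homomorphism f, right norm t (so f(t) = 1), right modular function m, and antipode S. Then the Nakayama automorphism η of H relative to f and its inverse are given, for all a ∈ H, by η(a) = S²(a ↼ m^{-1}) = (S² a) ↼ m^{-1} and η^{-1}(a) = S^{-2}(a ↼ m) = (S^{-2} a) ↼ m, where m^{-1} = m ∘ S is the convolution inverse of m. -/

import Mathlib

open TensorProduct Coalgebra HopfAlgebra

/-- `(φ, x, y)` is a Frobenius system for the `k`-algebra `A`. -/
def IsFrobeniusSystem (k : Type*) [CommRing k] (A : Type*) [Ring A] [Algebra k A]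
    (φ : A →ₗ[k] k) {n : ℕ} (x y : Fin n → A) : Prop :=
  ∀ a : A, (∑ i, φ (y i * a) • x i = a) ∧ (∑ i, φ (a * x i) • y i = a)

/-- The right action of `H*` on `H`: `a ↼ g = ∑ g(a₁) a₂`. -/
noncomputable def rAct (k : Type*) [CommRing k] (H : Type*) [AddCommGroup H] [Module k H]
    [Coalgebra k H] (g : H →ₗ[k] k) (a : H) : H :=
  (TensorProduct.lid k H) ((TensorProduct.map g LinearMap.id) (Coalgebra.comul (R := k) a))


section Aux

variable {k : Type*} [CommRing k] {H : Type*} [Ring H] [HopfAlgebra k H]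

local notation "S!" => HopfAlgebra.antipode (R := k) (A := H)
local notation "ε!" => Coalgebra.counit (R := k) (A := H)

lemma sum_counit_smul (a : H) (r : Repr k a (H × H)) :
    ∑ i ∈ r.index, ε! (r.left i) • r.right i = a := by
  calc ∑ i ∈ r.index, ε! (r.left i) • r.right i
      = TensorProduct.lid k H (∑ i ∈ r.index, ε! (r.left i) ⊗ₜ[k] r.right i) := by
        rw [map_sum]; simp
    _ = TensorProduct.lid k H ((1 : k) ⊗ₜ[k] a) := by rw [sum_counit_tmul_eq]
    _ = a := by simp

lemma sum_smul_counit (a : H) (r : Repr k a (H × H)) :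
    ∑ i ∈ r.index, ε! (r.right i) • r.left i = a := by
  calc ∑ i ∈ r.index, ε! (r.right i) • r.left i
      = TensorProduct.rid k H (∑ i ∈ r.index, r.left i ⊗ₜ[k] ε! (r.right i)) := by
        rw [map_sum]; simp
    _ = TensorProduct.rid k H (a ⊗ₜ[k] (1 : k)) := by rw [sum_tmul_counit_eq]
    _ = a := by simp

lemma sweedler_rotate {M : Type*} [AddCommGroup M] [Module k M]
    (Ψ : H ⊗[k] (H ⊗[k] H) →ₗ[k] M) (a : H) (r : Repr k a (H × H))
    (rL : ∀ i : r.ι, Repr k (r.left i) (H × H)) (rR : ∀ i : r.ι, Repr k (r.right i) (H × H)) :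
    ∑ i ∈ r.index, ∑ j ∈ (rL i).index,
        Ψ ((rL i).left j ⊗ₜ[k] ((rL i).right j ⊗ₜ[k] r.right i))
      = ∑ i ∈ r.index, ∑ j ∈ (rR i).index,
        Ψ (r.left i ⊗ₜ[k] ((rR i).left j ⊗ₜ[k] (rR i).right j)) := by
  have h := congrArg Ψ (sum_tmul_tmul_eq (R := k) r rL rR)
  simpa [map_sum] using h

noncomputable def mulRepr {ι κ : Type*} {a b : H} (ra : Repr k a ι) (rb : Repr k b κ) :
    Repr k (a * b) (ι × κ) where
  index := ra.index ×ˢ rb.index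
  left := fun p => ra.left p.1 * rb.left p.2
  right := fun p => ra.right p.1 * rb.right p.2
  eq := by
    rw [Bialgebra.comul_mul (R := k) a b, ← ra.eq, ← rb.eq, Finset.sum_mul_sum,
      Finset.sum_product]
    simp [Algebra.TensorProduct.tmul_mul_tmul]

lemma antipode_one' : S! (1 : H) = 1 := by
  have h := mul_antipode_rTensor_comul_apply (R := k) (a := (1 : H))
  have hc : Coalgebra.comul (R := k) (1 : H) = (1 : H) ⊗ₜ[k] (1 : H) := by
    rw [← Bialgebra.comulAlgHom_apply k H, map_one, Algebra.TensorProduct.one_def]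
  rw [hc] at h
  simpa using h

noncomputable def biAct (A : H →ₗ[k] H) (B : H ⊗[k] H →ₗ[k] H) :
    H ⊗[k] (H ⊗[k] H) →ₗ[k] H :=
  (LinearMap.mul' k H) ∘ₗ TensorProduct.map A B

@[simp] lemma biAct_tmul (A : H →ₗ[k] H) (B : H ⊗[k] H →ₗ[k] H) (x : H) (w : H ⊗[k] H) :
    biAct A B (x ⊗ₜ[k] w) = A x * B w := rfl

/-- The antipode is an anti-homomorphism. -/
lemma antipode_mul' (a b : H) :
    S! (a * b) = S! b * S! a := by
  classical
  have hGK : ∀ (u v : H) (ru : Repr k u (H × H)) (rv : Repr k v (H × H)),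
      ∑ j ∈ ru.index, ∑ l ∈ rv.index,
        ru.left j * (rv.left l * (S! (rv.right l) * S! (ru.right j)))
      = (ε! u * ε! v) • (1 : H) := by
    intro u v ru rv
    have h1 : ∀ j, ∑ l ∈ rv.index,
        ru.left j * (rv.left l * (S! (rv.right l) * S! (ru.right j)))
        = ε! v • (ru.left j * S! (ru.right j)) := by
      intro j
      calc ∑ l ∈ rv.index, ru.left j * (rv.left l * (S! (rv.right l) * S! (ru.right j)))
          = ru.left j * ((∑ l ∈ rv.index, rv.left l * S! (rv.right l)) * S! (ru.right j)) := by
            rw [Finset.sum_mul, Finset.mul_sum]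
            simp [mul_assoc]
        _ = ε! v • (ru.left j * S! (ru.right j)) := by
            rw [sum_mul_antipode_eq_smul rv]
            simp [smul_mul_assoc, mul_smul_comm]
    calc ∑ j ∈ ru.index, ∑ l ∈ rv.index,
          ru.left j * (rv.left l * (S! (rv.right l) * S! (ru.right j)))
        = ∑ j ∈ ru.index, ε! v • (ru.left j * S! (ru.right j)) :=
          Finset.sum_congr rfl fun j _ => h1 j
      _ = ε! v • ∑ j ∈ ru.index, ru.left j * S! (ru.right j) := by rw [Finset.smul_sum]
      _ = (ε! u * ε! v) • (1 : H) := by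
          rw [sum_mul_antipode_eq_smul ru, smul_smul, mul_comm]
  have hFG : ∀ (u v : H) (ru : Repr k u (H × H)) (rv : Repr k v (H × H)),
      ∑ j ∈ ru.index, ∑ l ∈ rv.index,
        S! (ru.left j * rv.left l) * (ru.right j * rv.right l)
      = (ε! u * ε! v) • (1 : H) := by
    intro u v ru rv
    have h := sum_antipode_mul_eq_smul (R := k) (mulRepr ru rv)
    simp only [mulRepr, Finset.sum_product, Bialgebra.counit_mul] at h
    exact h
  have ra : Repr k a (H × H) := ℛ k a
  have rb : Repr k b (H × H) := ℛ k b
  have rpa : ∀ i : ra.ι, Repr k (ra.left i) (H × H) := fun i => ℛ k _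
  have rqa : ∀ i : ra.ι, Repr k (ra.right i) (H × H) := fun i => ℛ k _
  have rpb : ∀ s : rb.ι, Repr k (rb.left s) (H × H) := fun s => ℛ k _
  have rqb : ∀ s : rb.ι, Repr k (rb.right s) (H × H) := fun s => ℛ k _
  -- step 1 : Sweedler rotation in `a`, for fixed (s,l)
  have step1 : ∀ (s : rb.ι) (l : (rqb s).ι),
      ∑ i ∈ ra.index, ∑ j ∈ (rpa i).index,
        S! ((rpa i).left j * rb.left s) *
          ((rpa i).right j * ((rqb s).left l * (S! ((rqb s).right l) * S! (ra.right i))))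
      = ∑ i ∈ ra.index, ∑ j ∈ (rqa i).index,
        S! (ra.left i * rb.left s) *
          ((rqa i).left j * ((rqb s).left l * (S! ((rqb s).right l) * S! ((rqa i).right j)))) := by
    intro s l
    have h := sweedler_rotate
      (biAct (S! ∘ₗ LinearMap.mulRight k (rb.left s))
        ((LinearMap.mul' k H) ∘ₗ TensorProduct.map LinearMap.id
          ((LinearMap.mulLeft k ((rqb s).left l)) ∘ₗ
            (LinearMap.mulLeft k (S! ((rqb s).right l))) ∘ₗ S!)))
      a ra rpa rqa
    simpa using h
  -- step 2 : Sweedler rotation in `b`, for fixed (i,j)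
  have step2 : ∀ (i : ra.ι) (j : (rpa i).ι),
      ∑ s ∈ rb.index, ∑ l ∈ (rpb s).index,
        S! ((rpa i).left j * (rpb s).left l) *
          ((rpa i).right j * ((rpb s).right l * (S! (rb.right s) * S! (ra.right i))))
      = ∑ s ∈ rb.index, ∑ l ∈ (rqb s).index,
        S! ((rpa i).left j * rb.left s) *
          ((rpa i).right j * ((rqb s).left l * (S! ((rqb s).right l) * S! (ra.right i)))) := by
    intro i j
    have h := sweedler_rotate
      (biAct (S! ∘ₗ LinearMap.mulLeft k ((rpa i).left j))
        ((LinearMap.mulLeft k ((rpa i).right j)) ∘ₗ (LinearMap.mul' k H) ∘ₗ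
          TensorProduct.map LinearMap.id
            ((LinearMap.mulRight k (S! (ra.right i))) ∘ₗ S!)))
      b rb rpb rqb
    simpa using h
  -- route A : evaluate the T-sum
  have routeA :
      ∑ i ∈ ra.index, ∑ s ∈ rb.index, ∑ j ∈ (rqa i).index, ∑ l ∈ (rqb s).index,
        S! (ra.left i * rb.left s) *
          ((rqa i).left j * ((rqb s).left l * (S! ((rqb s).right l) * S! ((rqa i).right j))))
      = S! (a * b) := by
    have h1 : ∀ i s,
        ∑ j ∈ (rqa i).index, ∑ l ∈ (rqb s).index,
          S! (ra.left i * rb.left s) *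
            ((rqa i).left j * ((rqb s).left l * (S! ((rqb s).right l) * S! ((rqa i).right j))))
        = (ε! (ra.right i) * ε! (rb.right s)) • S! (ra.left i * rb.left s) := by
      intro i s
      calc ∑ j ∈ (rqa i).index, ∑ l ∈ (rqb s).index,
            S! (ra.left i * rb.left s) *
              ((rqa i).left j * ((rqb s).left l * (S! ((rqb s).right l) * S! ((rqa i).right j))))
          = S! (ra.left i * rb.left s) *
              ∑ j ∈ (rqa i).index, ∑ l ∈ (rqb s).index,
                (rqa i).left j * ((rqb s).left l * (S! ((rqb s).right l) * S! ((rqa i).right j))) := by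
            rw [Finset.mul_sum]
            exact Finset.sum_congr rfl fun j _ => by rw [Finset.mul_sum]
        _ = (ε! (ra.right i) * ε! (rb.right s)) • S! (ra.left i * rb.left s) := by
            rw [hGK _ _ (rqa i) (rqb s), mul_smul_comm, mul_one]
    calc ∑ i ∈ ra.index, ∑ s ∈ rb.index, ∑ j ∈ (rqa i).index, ∑ l ∈ (rqb s).index,
          S! (ra.left i * rb.left s) *
            ((rqa i).left j * ((rqb s).left l * (S! ((rqb s).right l) * S! ((rqa i).right j))))
        = ∑ i ∈ ra.index, ∑ s ∈ rb.index,
            (ε! (ra.right i) * ε! (rb.right s)) • S! (ra.left i * rb.left s) :=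
          Finset.sum_congr rfl fun i _ => Finset.sum_congr rfl fun s _ => h1 i s
      _ = S! (∑ i ∈ ra.index, ∑ s ∈ rb.index,
            (ε! (ra.right i) • ra.left i) * (ε! (rb.right s) • rb.left s)) := by
          rw [map_sum]
          refine Finset.sum_congr rfl fun i _ => ?_
          rw [map_sum]
          refine Finset.sum_congr rfl fun s _ => ?_
          rw [smul_mul_assoc, mul_smul_comm, smul_smul, map_smul]
      _ = S! (a * b) := by
          rw [show (∑ i ∈ ra.index, ∑ s ∈ rb.index,
              (ε! (ra.right i) • ra.left i) * (ε! (rb.right s) • rb.left s)) = a * b from by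
            rw [← Finset.sum_mul_sum, sum_smul_counit a ra, sum_smul_counit b rb]]
  -- route B : evaluate the V-sum
  have routeB :
      ∑ i ∈ ra.index, ∑ s ∈ rb.index, ∑ j ∈ (rpa i).index, ∑ l ∈ (rpb s).index,
        S! ((rpa i).left j * (rpb s).left l) *
          ((rpa i).right j * ((rpb s).right l * (S! (rb.right s) * S! (ra.right i))))
      = S! b * S! a := by
    have h1 : ∀ i s,
        ∑ j ∈ (rpa i).index, ∑ l ∈ (rpb s).index,
          S! ((rpa i).left j * (rpb s).left l) *
            ((rpa i).right j * ((rpb s).right l * (S! (rb.right s) * S! (ra.right i))))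
        = (ε! (ra.left i) * ε! (rb.left s)) • (S! (rb.right s) * S! (ra.right i)) := by
      intro i s
      calc ∑ j ∈ (rpa i).index, ∑ l ∈ (rpb s).index,
            S! ((rpa i).left j * (rpb s).left l) *
              ((rpa i).right j * ((rpb s).right l * (S! (rb.right s) * S! (ra.right i))))
          = (∑ j ∈ (rpa i).index, ∑ l ∈ (rpb s).index,
              S! ((rpa i).left j * (rpb s).left l) * ((rpa i).right j * (rpb s).right l)) *
              (S! (rb.right s) * S! (ra.right i)) := by
            rw [Finset.sum_mul]
            refine Finset.sum_congr rfl fun j _ => ?_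
            rw [Finset.sum_mul]
            refine Finset.sum_congr rfl fun l _ => ?_
            simp [mul_assoc]
        _ = (ε! (ra.left i) * ε! (rb.left s)) • (S! (rb.right s) * S! (ra.right i)) := by
            rw [hFG _ _ (rpa i) (rpb s), smul_mul_assoc, one_mul]
    calc ∑ i ∈ ra.index, ∑ s ∈ rb.index, ∑ j ∈ (rpa i).index, ∑ l ∈ (rpb s).index,
          S! ((rpa i).left j * (rpb s).left l) *
            ((rpa i).right j * ((rpb s).right l * (S! (rb.right s) * S! (ra.right i))))
        = ∑ i ∈ ra.index, ∑ s ∈ rb.index,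
            (ε! (ra.left i) * ε! (rb.left s)) • (S! (rb.right s) * S! (ra.right i)) :=
          Finset.sum_congr rfl fun i _ => Finset.sum_congr rfl fun s _ => h1 i s
      _ = ∑ i ∈ ra.index, ∑ s ∈ rb.index,
            (ε! (rb.left s) • S! (rb.right s)) * (ε! (ra.left i) • S! (ra.right i)) := by
          refine Finset.sum_congr rfl fun i _ => Finset.sum_congr rfl fun s _ => ?_
          rw [smul_mul_assoc, mul_smul_comm, smul_smul, mul_comm]
      _ = (∑ s ∈ rb.index, ε! (rb.left s) • S! (rb.right s)) *
            (∑ i ∈ ra.index, ε! (ra.left i) • S! (ra.right i)) := by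
          rw [Finset.sum_mul_sum, Finset.sum_comm]
      _ = S! b * S! a := by
          have hb : ∑ s ∈ rb.index, ε! (rb.left s) • S! (rb.right s) = S! b := by
            conv_rhs => rw [← sum_counit_smul b rb]
            rw [map_sum]
            exact Finset.sum_congr rfl fun s _ => (map_smul _ _ _).symm
          have ha : ∑ i ∈ ra.index, ε! (ra.left i) • S! (ra.right i) = S! a := by
            conv_rhs => rw [← sum_counit_smul a ra]
            rw [map_sum]
            exact Finset.sum_congr rfl fun i _ => (map_smul _ _ _).symm
          rw [hb, ha]
  -- chain everything together
  calc S! (a * b)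
      = ∑ i ∈ ra.index, ∑ s ∈ rb.index, ∑ j ∈ (rqa i).index, ∑ l ∈ (rqb s).index,
          S! (ra.left i * rb.left s) *
            ((rqa i).left j * ((rqb s).left l * (S! ((rqb s).right l) * S! ((rqa i).right j)))) :=
        routeA.symm
    _ = ∑ i ∈ ra.index, ∑ s ∈ rb.index, ∑ l ∈ (rqb s).index, ∑ j ∈ (rqa i).index,
          S! (ra.left i * rb.left s) *
            ((rqa i).left j * ((rqb s).left l * (S! ((rqb s).right l) * S! ((rqa i).right j)))) :=
        Finset.sum_congr rfl fun i _ => Finset.sum_congr rfl fun s _ => Finset.sum_comm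
    _ = ∑ s ∈ rb.index, ∑ i ∈ ra.index, ∑ l ∈ (rqb s).index, ∑ j ∈ (rqa i).index,
          S! (ra.left i * rb.left s) *
            ((rqa i).left j * ((rqb s).left l * (S! ((rqb s).right l) * S! ((rqa i).right j)))) :=
        Finset.sum_comm
    _ = ∑ s ∈ rb.index, ∑ l ∈ (rqb s).index, ∑ i ∈ ra.index, ∑ j ∈ (rqa i).index,
          S! (ra.left i * rb.left s) *
            ((rqa i).left j * ((rqb s).left l * (S! ((rqb s).right l) * S! ((rqa i).right j)))) :=
        Finset.sum_congr rfl fun s _ => Finset.sum_comm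
    _ = ∑ s ∈ rb.index, ∑ l ∈ (rqb s).index, ∑ i ∈ ra.index, ∑ j ∈ (rpa i).index,
          S! ((rpa i).left j * rb.left s) *
            ((rpa i).right j * ((rqb s).left l * (S! ((rqb s).right l) * S! (ra.right i)))) :=
        Finset.sum_congr rfl fun s _ => Finset.sum_congr rfl fun l _ => (step1 s l).symm
    _ = ∑ s ∈ rb.index, ∑ i ∈ ra.index, ∑ l ∈ (rqb s).index, ∑ j ∈ (rpa i).index,
          S! ((rpa i).left j * rb.left s) *
            ((rpa i).right j * ((rqb s).left l * (S! ((rqb s).right l) * S! (ra.right i)))) :=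
        Finset.sum_congr rfl fun s _ => Finset.sum_comm
    _ = ∑ i ∈ ra.index, ∑ s ∈ rb.index, ∑ l ∈ (rqb s).index, ∑ j ∈ (rpa i).index,
          S! ((rpa i).left j * rb.left s) *
            ((rpa i).right j * ((rqb s).left l * (S! ((rqb s).right l) * S! (ra.right i)))) :=
        Finset.sum_comm
    _ = ∑ i ∈ ra.index, ∑ s ∈ rb.index, ∑ j ∈ (rpa i).index, ∑ l ∈ (rqb s).index,
          S! ((rpa i).left j * rb.left s) *
            ((rpa i).right j * ((rqb s).left l * (S! ((rqb s).right l) * S! (ra.right i)))) :=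
        Finset.sum_congr rfl fun i _ => Finset.sum_congr rfl fun s _ => Finset.sum_comm
    _ = ∑ i ∈ ra.index, ∑ j ∈ (rpa i).index, ∑ s ∈ rb.index, ∑ l ∈ (rqb s).index,
          S! ((rpa i).left j * rb.left s) *
            ((rpa i).right j * ((rqb s).left l * (S! ((rqb s).right l) * S! (ra.right i)))) :=
        Finset.sum_congr rfl fun i _ => Finset.sum_comm
    _ = ∑ i ∈ ra.index, ∑ j ∈ (rpa i).index, ∑ s ∈ rb.index, ∑ l ∈ (rpb s).index,
          S! ((rpa i).left j * (rpb s).left l) *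
            ((rpa i).right j * ((rpb s).right l * (S! (rb.right s) * S! (ra.right i)))) :=
        Finset.sum_congr rfl fun i _ => Finset.sum_congr rfl fun j _ => (step2 i j).symm
    _ = ∑ i ∈ ra.index, ∑ s ∈ rb.index, ∑ j ∈ (rpa i).index, ∑ l ∈ (rpb s).index,
          S! ((rpa i).left j * (rpb s).left l) *
            ((rpa i).right j * ((rpb s).right l * (S! (rb.right s) * S! (ra.right i)))) :=
        Finset.sum_congr rfl fun i _ => Finset.sum_comm
    _ = S! b * S! a := routeB

noncomputable def Kmap : H →ₗ[k] H ⊗[k] H :=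
  (TensorProduct.comm k H H).toLinearMap ∘ₗ (TensorProduct.map S! S!) ∘ₗ
    (Coalgebra.comul (R := k))

lemma Kmap_repr (z : H) (rz : Repr k z (H × H)) :
    Kmap z = ∑ i ∈ rz.index, S! (rz.right i) ⊗ₜ[k] S! (rz.left i) := by
  show (TensorProduct.comm k H H) ((TensorProduct.map S! S!) (Coalgebra.comul (R := k) z))
      = _
  rw [← rz.eq, map_sum, map_sum]
  simp

lemma comul_one' : Coalgebra.comul (R := k) (1 : H) = (1 : H ⊗[k] H) := by
  rw [← Bialgebra.comulAlgHom_apply k H, map_one]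

/-- `(G ∗ F) = εη` in `Hom(H, H⊗H)`. -/
lemma hGF' (z : H) (rz : Repr k z (H × H)) :
    ∑ i ∈ rz.index,
      Coalgebra.comul (R := k) (rz.left i) * Coalgebra.comul (R := k) (S! (rz.right i))
    = ε! z • (1 : H ⊗[k] H) := by
  calc ∑ i ∈ rz.index,
        Coalgebra.comul (R := k) (rz.left i) * Coalgebra.comul (R := k) (S! (rz.right i))
      = ∑ i ∈ rz.index, Coalgebra.comul (R := k) (rz.left i * S! (rz.right i)) :=
        Finset.sum_congr rfl fun i _ => (Bialgebra.comul_mul (R := k) _ _).symm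
    _ = Coalgebra.comul (R := k) (∑ i ∈ rz.index, rz.left i * S! (rz.right i)) := by
        rw [map_sum]
    _ = ε! z • (1 : H ⊗[k] H) := by
        rw [sum_mul_antipode_eq_smul rz, map_smul, comul_one']

/-- `(K ∗ G) = εη` in `Hom(H, H⊗H)`. -/
lemma hKG' (z : H) (rz : Repr k z (H × H)) :
    ∑ i ∈ rz.index, Kmap (rz.left i) * Coalgebra.comul (R := k) (rz.right i)
    = ε! z • (1 : H ⊗[k] H) := by
  classical
  have rL : ∀ i : rz.ι, Repr k (rz.left i) (H × H) := fun i => ℛ k _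
  have rR : ∀ i : rz.ι, Repr k (rz.right i) (H × H) := fun i => ℛ k _
  have rLL : ∀ (i : rz.ι) (j : (rL i).ι), Repr k ((rL i).left j) (H × H) := fun i j => ℛ k _
  have rRR : ∀ (i : rz.ι) (j : (rL i).ι), Repr k ((rL i).right j) (H × H) := fun i j => ℛ k _
  -- Ψ₁ rotation
  have stepB :
      ∑ i ∈ rz.index, Kmap (rz.left i) * Coalgebra.comul (R := k) (rz.right i)
      = ∑ i ∈ rz.index, ∑ j ∈ (rL i).index,
          Kmap ((rL i).left j) * ((rL i).right j ⊗ₜ[k] rz.right i) := by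
    have h := sweedler_rotate
      ((LinearMap.mul' k (H ⊗[k] H)) ∘ₗ
        TensorProduct.map (Kmap (k := k) (H := H)) LinearMap.id) z rz rL rR
    have h2 : ∀ i, Kmap (rz.left i) * Coalgebra.comul (R := k) (rz.right i)
        = ∑ m ∈ (rR i).index, Kmap (rz.left i) * ((rR i).left m ⊗ₜ[k] (rR i).right m) := by
      intro i
      rw [← Finset.mul_sum, (rR i).eq]
    calc ∑ i ∈ rz.index, Kmap (rz.left i) * Coalgebra.comul (R := k) (rz.right i)
        = ∑ i ∈ rz.index, ∑ m ∈ (rR i).index,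
            Kmap (rz.left i) * ((rR i).left m ⊗ₜ[k] (rR i).right m) :=
          Finset.sum_congr rfl fun i _ => h2 i
      _ = ∑ i ∈ rz.index, ∑ j ∈ (rL i).index,
          Kmap ((rL i).left j) * ((rL i).right j ⊗ₜ[k] rz.right i) := by
          simpa using h.symm
  -- per-i collapse
  have stepC : ∀ i : rz.ι,
      ∑ j ∈ (rL i).index, Kmap ((rL i).left j) * ((rL i).right j ⊗ₜ[k] rz.right i)
      = (1 : H) ⊗ₜ[k] (S! (rz.left i) * rz.right i) := by
    intro i
    have hsw := sweedler_rotate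
      ((TensorProduct.map ((LinearMap.mul' k H) ∘ₗ TensorProduct.map S! LinearMap.id)
          ((LinearMap.mulRight k (rz.right i)) ∘ₗ S!)) ∘ₗ
        (TensorProduct.comm k H (H ⊗[k] H)).toLinearMap)
      (rz.left i) (rL i) (rLL i) (rRR i)
    have hL : ∑ j ∈ (rL i).index, Kmap ((rL i).left j) * ((rL i).right j ⊗ₜ[k] rz.right i)
        = ∑ j ∈ (rL i).index, ∑ n ∈ (rLL i j).index,
            (S! ((rLL i j).right n) * (rL i).right j) ⊗ₜ[k]
              (S! ((rLL i j).left n) * rz.right i) := by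
      refine Finset.sum_congr rfl fun j _ => ?_
      rw [Kmap_repr _ (rLL i j), Finset.sum_mul]
      exact Finset.sum_congr rfl fun n _ => by
        rw [Algebra.TensorProduct.tmul_mul_tmul]
    rw [hL]
    have hsw' : ∑ j ∈ (rL i).index, ∑ n ∈ (rLL i j).index,
        (S! ((rLL i j).right n) * (rL i).right j) ⊗ₜ[k]
          (S! ((rLL i j).left n) * rz.right i)
        = ∑ j ∈ (rL i).index, ∑ n ∈ (rRR i j).index,
            (S! ((rRR i j).left n) * (rRR i j).right n) ⊗ₜ[k]
              (S! ((rL i).left j) * rz.right i) := by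
      simpa using hsw
    rw [hsw']
    calc ∑ j ∈ (rL i).index, ∑ n ∈ (rRR i j).index,
          (S! ((rRR i j).left n) * (rRR i j).right n) ⊗ₜ[k]
            (S! ((rL i).left j) * rz.right i)
        = ∑ j ∈ (rL i).index,
            (ε! ((rL i).right j) • (1 : H)) ⊗ₜ[k] (S! ((rL i).left j) * rz.right i) := by
          refine Finset.sum_congr rfl fun j _ => ?_
          rw [← TensorProduct.sum_tmul, sum_antipode_mul_eq_smul (rRR i j)]
      _ = (1 : H) ⊗ₜ[k] ((∑ j ∈ (rL i).index, ε! ((rL i).right j) • S! ((rL i).left j)) *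
            rz.right i) := by
          rw [Finset.sum_mul, TensorProduct.tmul_sum]
          refine Finset.sum_congr rfl fun j _ => ?_
          rw [smul_mul_assoc, TensorProduct.smul_tmul]
      _ = (1 : H) ⊗ₜ[k] (S! (rz.left i) * rz.right i) := by
          have : ∑ j ∈ (rL i).index, ε! ((rL i).right j) • S! ((rL i).left j)
              = S! (rz.left i) := by
            conv_rhs => rw [← sum_smul_counit (rz.left i) (rL i)]
            rw [map_sum]
            exact Finset.sum_congr rfl fun j _ => (map_smul _ _ _).symm
          rw [this]
  calc ∑ i ∈ rz.index, Kmap (rz.left i) * Coalgebra.comul (R := k) (rz.right i)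
      = ∑ i ∈ rz.index, (1 : H) ⊗ₜ[k] (S! (rz.left i) * rz.right i) := by
        rw [stepB]; exact Finset.sum_congr rfl fun i _ => stepC i
    _ = (1 : H) ⊗ₜ[k] ∑ i ∈ rz.index, S! (rz.left i) * rz.right i := by
        rw [TensorProduct.tmul_sum]
    _ = ε! z • (1 : H ⊗[k] H) := by
        rw [sum_antipode_mul_eq_smul rz, Algebra.TensorProduct.one_def,
          TensorProduct.tmul_smul]

/-- The antipode is an anti-morphism of coalgebras. -/
lemma comul_antipode' (x : H) :
    Coalgebra.comul (R := k) (S! x) = Kmap x := by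
  classical
  have rz : Repr k x (H × H) := ℛ k x
  have rL : ∀ i : rz.ι, Repr k (rz.left i) (H × H) := fun i => ℛ k _
  have rR : ∀ i : rz.ι, Repr k (rz.right i) (H × H) := fun i => ℛ k _
  have hsw := sweedler_rotate
    ((LinearMap.mul' k (H ⊗[k] H)) ∘ₗ
      TensorProduct.map (Kmap (k := k) (H := H))
        ((LinearMap.mul' k (H ⊗[k] H)) ∘ₗ
          TensorProduct.map (Coalgebra.comul (R := k))
            ((Coalgebra.comul (R := k)) ∘ₗ S!))) x rz rL rR
  have routeA : ∑ i ∈ rz.index, ∑ m ∈ (rR i).index,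
      Kmap (rz.left i) * (Coalgebra.comul (R := k) ((rR i).left m) *
        Coalgebra.comul (R := k) (S! ((rR i).right m)))
      = Kmap x := by
    calc ∑ i ∈ rz.index, ∑ m ∈ (rR i).index,
          Kmap (rz.left i) * (Coalgebra.comul (R := k) ((rR i).left m) *
            Coalgebra.comul (R := k) (S! ((rR i).right m)))
        = ∑ i ∈ rz.index, Kmap (rz.left i) *
            ∑ m ∈ (rR i).index, Coalgebra.comul (R := k) ((rR i).left m) *
              Coalgebra.comul (R := k) (S! ((rR i).right m)) := by
          exact Finset.sum_congr rfl fun i _ => by rw [Finset.mul_sum]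
      _ = ∑ i ∈ rz.index, ε! (rz.right i) • Kmap (rz.left i) := by
          refine Finset.sum_congr rfl fun i _ => ?_
          rw [hGF' _ (rR i), mul_smul_comm, mul_one]
      _ = Kmap x := by
          conv_rhs => rw [← sum_smul_counit x rz]
          rw [map_sum]
          exact Finset.sum_congr rfl fun i _ => (map_smul _ _ _).symm
  have routeB : ∑ i ∈ rz.index, ∑ j ∈ (rL i).index,
      Kmap ((rL i).left j) * (Coalgebra.comul (R := k) ((rL i).right j) *
        Coalgebra.comul (R := k) (S! (rz.right i)))
      = Coalgebra.comul (R := k) (S! x) := by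
    calc ∑ i ∈ rz.index, ∑ j ∈ (rL i).index,
          Kmap ((rL i).left j) * (Coalgebra.comul (R := k) ((rL i).right j) *
            Coalgebra.comul (R := k) (S! (rz.right i)))
        = ∑ i ∈ rz.index,
            (∑ j ∈ (rL i).index, Kmap ((rL i).left j) *
              Coalgebra.comul (R := k) ((rL i).right j)) *
              Coalgebra.comul (R := k) (S! (rz.right i)) := by
          refine Finset.sum_congr rfl fun i _ => ?_
          rw [Finset.sum_mul]
          exact Finset.sum_congr rfl fun j _ => (mul_assoc _ _ _).symm
      _ = ∑ i ∈ rz.index, ε! (rz.left i) • Coalgebra.comul (R := k) (S! (rz.right i)) := by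
          refine Finset.sum_congr rfl fun i _ => ?_
          rw [hKG' _ (rL i), smul_mul_assoc, one_mul]
      _ = Coalgebra.comul (R := k) (S! x) := by
          conv_rhs => rw [← sum_counit_smul x rz]
          rw [map_sum, map_sum]
          refine Finset.sum_congr rfl fun i _ => ?_
          rw [map_smul, map_smul]
  have hconn : ∑ i ∈ rz.index, ∑ j ∈ (rL i).index,
      Kmap ((rL i).left j) * (Coalgebra.comul (R := k) ((rL i).right j) *
        Coalgebra.comul (R := k) (S! (rz.right i)))
      = ∑ i ∈ rz.index, ∑ m ∈ (rR i).index,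
        Kmap (rz.left i) * (Coalgebra.comul (R := k) ((rR i).left m) *
          Coalgebra.comul (R := k) (S! ((rR i).right m))) := by
    simpa using hsw
  rw [← routeB, hconn, routeA]

noncomputable def rActL (g : H →ₗ[k] k) : H →ₗ[k] H :=
  (TensorProduct.lid k H).toLinearMap ∘ₗ (TensorProduct.map g LinearMap.id) ∘ₗ
    (Coalgebra.comul (R := k))

lemma rActL_apply (g : H →ₗ[k] k) (a : H) :
    rActL g a = (TensorProduct.lid k H)
      ((TensorProduct.map g LinearMap.id) (Coalgebra.comul (R := k) a)) := rfl

lemma rActL_repr {ι : Type*} (g : H →ₗ[k] k) (a : H) (r : Repr k a ι) :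
    rActL g a = ∑ i ∈ r.index, g (r.left i) • r.right i := by
  rw [rActL_apply, ← r.eq]
  simp [map_sum]

lemma rAct_counit (w : H) : rActL (k := k) (Coalgebra.counit (R := k)) w = w := by
  rw [rActL_repr _ _ (ℛ k w)]
  exact sum_counit_smul w (ℛ k w)

lemma Kmap_apply (z : H) : Kmap (k := k) z
    = (TensorProduct.comm k H H) ((TensorProduct.map S! S!) (Coalgebra.comul (R := k) z)) := rfl

lemma comm_comm' (X : H ⊗[k] H) :
    (TensorProduct.comm k H H) ((TensorProduct.comm k H H) X) = X := by
  induction X using TensorProduct.induction_on with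
  | zero => simp
  | tmul u v => simp
  | add u v hu hv => rw [map_add, map_add, hu, hv]

lemma comm_map' (A B : H →ₗ[k] H) (X : H ⊗[k] H) :
    (TensorProduct.comm k H H) (TensorProduct.map A B X)
      = TensorProduct.map B A ((TensorProduct.comm k H H) X) := by
  induction X using TensorProduct.induction_on with
  | zero => simp
  | tmul u v => simp
  | add u v hu hv => rw [map_add, map_add, hu, hv, map_add, map_add]

noncomputable def mconv (g h : H →ₗ[k] k) : H →ₗ[k] k :=
  (LinearMap.mul' k k) ∘ₗ TensorProduct.map g h ∘ₗ (Coalgebra.comul (R := k))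

lemma mconv_repr (g h : H →ₗ[k] k) (z : H) (r : Repr k z (H × H)) :
    mconv g h z = ∑ i ∈ r.index, g (r.left i) * h (r.right i) := by
  show (LinearMap.mul' k k) ((TensorProduct.map g h) (Coalgebra.comul (R := k) z)) = _
  rw [← r.eq, map_sum, map_sum]
  simp

lemma rActL_rActL (g h : H →ₗ[k] k) (a : H) :
    rActL h (rActL g a) = rActL (mconv g h) a := by
  classical
  have r : Repr k a (H × H) := ℛ k a
  have rL : ∀ i : r.ι, Repr k (r.left i) (H × H) := fun i => ℛ k _
  have rR : ∀ i : r.ι, Repr k (r.right i) (H × H) := fun i => ℛ k _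
  have hsw := sweedler_rotate
    ((TensorProduct.lid k H).toLinearMap ∘ₗ
      TensorProduct.map g ((TensorProduct.lid k H).toLinearMap ∘ₗ
        TensorProduct.map h LinearMap.id)) a r rL rR
  calc rActL h (rActL g a)
      = ∑ i ∈ r.index, g (r.left i) • rActL h (r.right i) := by
        rw [rActL_repr g a r, map_sum]
        exact Finset.sum_congr rfl fun i _ => map_smul _ _ _
    _ = ∑ i ∈ r.index, ∑ j ∈ (rR i).index,
          g (r.left i) • (h ((rR i).left j) • (rR i).right j) := by
        refine Finset.sum_congr rfl fun i _ => ?_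
        rw [rActL_repr h _ (rR i), Finset.smul_sum]
    _ = ∑ i ∈ r.index, ∑ j ∈ (rL i).index,
          g ((rL i).left j) • (h ((rL i).right j) • r.right i) := by
        simpa only [LinearMap.comp_apply, LinearEquiv.coe_coe, TensorProduct.map_tmul,
          TensorProduct.lid_tmul, LinearMap.id_coe, id_eq] using hsw.symm
    _ = ∑ i ∈ r.index, (∑ j ∈ (rL i).index, g ((rL i).left j) * h ((rL i).right j)) •
          r.right i := by
        refine Finset.sum_congr rfl fun i _ => ?_
        rw [Finset.sum_smul]
        exact Finset.sum_congr rfl fun j _ => smul_smul _ _ _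
    _ = ∑ i ∈ r.index, mconv g h (r.left i) • r.right i := by
        refine Finset.sum_congr rfl fun i _ => ?_
        rw [mconv_repr g h _ (rL i)]
    _ = rActL (mconv g h) a := (rActL_repr _ a r).symm

lemma mconv_assoc (g h l : H →ₗ[k] k) :
    mconv (mconv g h) l = mconv g (mconv h l) := by
  classical
  ext z
  have r : Repr k z (H × H) := ℛ k z
  have rL : ∀ i : r.ι, Repr k (r.left i) (H × H) := fun i => ℛ k _
  have rR : ∀ i : r.ι, Repr k (r.right i) (H × H) := fun i => ℛ k _
  have hsw := sweedler_rotate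
    ((LinearMap.mul' k k) ∘ₗ
      TensorProduct.map g ((LinearMap.mul' k k) ∘ₗ TensorProduct.map h l)) z r rL rR
  calc mconv (mconv g h) l z
      = ∑ i ∈ r.index, mconv g h (r.left i) * l (r.right i) := mconv_repr _ _ z r
    _ = ∑ i ∈ r.index, ∑ j ∈ (rL i).index,
          g ((rL i).left j) * (h ((rL i).right j) * l (r.right i)) := by
        refine Finset.sum_congr rfl fun i _ => ?_
        rw [mconv_repr g h _ (rL i), Finset.sum_mul]
        exact Finset.sum_congr rfl fun j _ => mul_assoc _ _ _
    _ = ∑ i ∈ r.index, ∑ j ∈ (rR i).index,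
          g (r.left i) * (h ((rR i).left j) * l ((rR i).right j)) := by
        simpa using hsw
    _ = ∑ i ∈ r.index, g (r.left i) * mconv h l (r.right i) := by
        refine Finset.sum_congr rfl fun i _ => ?_
        rw [mconv_repr h l _ (rR i), Finset.mul_sum]
    _ = mconv g (mconv h l) z := (mconv_repr _ _ z r).symm

lemma mconv_counit_left (g : H →ₗ[k] k) :
    mconv (Coalgebra.counit (R := k)) g = g := by
  ext z
  rw [mconv_repr _ _ z (ℛ k z)]
  conv_rhs => rw [← sum_counit_smul z (ℛ k z)]
  rw [map_sum]
  exact Finset.sum_congr rfl fun i _ => by rw [map_smul, smul_eq_mul]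

lemma mconv_counit_right (g : H →ₗ[k] k) :
    mconv g (Coalgebra.counit (R := k)) = g := by
  ext z
  rw [mconv_repr _ _ z (ℛ k z)]
  conv_rhs => rw [← sum_smul_counit z (ℛ k z)]
  rw [map_sum]
  exact Finset.sum_congr rfl fun i _ => by rw [map_smul, smul_eq_mul, mul_comm]

/-- The fundamental identity for right integrals:
`∑ f(x₍₁₎ y) x₍₂₎ = S (∑ f(x y₍₁₎) y₍₂₎)`. -/
lemma star_id (f : H →ₗ[k] k) (hri : ∀ w : H, rActL (k := k) f w = f w • (1 : H))
    (x0 y0 : H) :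
    rActL (k := k) (f ∘ₗ LinearMap.mulRight k y0) x0
      = S! (rActL (k := k) (f ∘ₗ LinearMap.mulLeft k x0) y0) := by
  classical
  have rx : Repr k x0 (H × H) := ℛ k x0
  have ry : Repr k y0 (H × H) := ℛ k y0
  have rLy : ∀ j : ry.ι, Repr k (ry.left j) (H × H) := fun j => ℛ k _
  have rRy : ∀ j : ry.ι, Repr k (ry.right j) (H × H) := fun j => ℛ k _
  have main : S! (rActL (k := k) (f ∘ₗ LinearMap.mulLeft k x0) y0)
      = rActL (k := k) (f ∘ₗ LinearMap.mulRight k y0) x0 := by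
    calc S! (rActL (k := k) (f ∘ₗ LinearMap.mulLeft k x0) y0)
        = ∑ j ∈ ry.index, f (x0 * ry.left j) • S! (ry.right j) := by
          rw [rActL_repr _ _ ry, map_sum]
          exact Finset.sum_congr rfl fun j _ => by rw [map_smul]; simp
      _ = ∑ j ∈ ry.index, rActL (k := k) f (x0 * ry.left j) * S! (ry.right j) := by
          refine Finset.sum_congr rfl fun j _ => ?_
          rw [hri, smul_mul_assoc, one_mul]
      _ = ∑ j ∈ ry.index, ∑ i ∈ rx.index, ∑ n ∈ (rLy j).index,
            f (rx.left i * (rLy j).left n) •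
              (rx.right i * ((rLy j).right n * S! (ry.right j))) := by
          refine Finset.sum_congr rfl fun j _ => ?_
          rw [rActL_repr f _ (mulRepr rx (rLy j))]
          simp only [mulRepr, Finset.sum_product]
          rw [Finset.sum_mul]
          refine Finset.sum_congr rfl fun i _ => ?_
          rw [Finset.sum_mul]
          refine Finset.sum_congr rfl fun n _ => ?_
          rw [smul_mul_assoc, mul_assoc]
      _ = ∑ i ∈ rx.index, ∑ j ∈ ry.index, ∑ n ∈ (rLy j).index,
            f (rx.left i * (rLy j).left n) •
              (rx.right i * ((rLy j).right n * S! (ry.right j))) := Finset.sum_comm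
      _ = ∑ i ∈ rx.index, ∑ j ∈ ry.index, ∑ n ∈ (rRy j).index,
            f (rx.left i * ry.left j) •
              (rx.right i * ((rRy j).left n * S! ((rRy j).right n))) := by
          refine Finset.sum_congr rfl fun i _ => ?_
          have hsw := sweedler_rotate
            ((TensorProduct.lid k H).toLinearMap ∘ₗ
              TensorProduct.map (f ∘ₗ LinearMap.mulLeft k (rx.left i))
                ((LinearMap.mulLeft k (rx.right i)) ∘ₗ (LinearMap.mul' k H) ∘ₗ
                  TensorProduct.map LinearMap.id S!)) y0 ry rLy rRy
          simpa using hsw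
      _ = ∑ i ∈ rx.index, ∑ j ∈ ry.index,
            (f (rx.left i * ry.left j) * ε! (ry.right j)) • rx.right i := by
          refine Finset.sum_congr rfl fun i _ => Finset.sum_congr rfl fun j _ => ?_
          calc ∑ n ∈ (rRy j).index, f (rx.left i * ry.left j) •
                (rx.right i * ((rRy j).left n * S! ((rRy j).right n)))
              = f (rx.left i * ry.left j) •
                  (rx.right i * ∑ n ∈ (rRy j).index,
                    (rRy j).left n * S! ((rRy j).right n)) := by
                rw [Finset.mul_sum, Finset.smul_sum]
            _ = (f (rx.left i * ry.left j) * ε! (ry.right j)) • rx.right i := by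
                rw [sum_mul_antipode_eq_smul (rRy j), mul_smul_comm, mul_one, smul_smul]
      _ = ∑ i ∈ rx.index, f (rx.left i * y0) • rx.right i := by
          refine Finset.sum_congr rfl fun i _ => ?_
          rw [← Finset.sum_smul]
          congr 1
          calc ∑ j ∈ ry.index, f (rx.left i * ry.left j) * ε! (ry.right j)
              = f (rx.left i * ∑ j ∈ ry.index, ε! (ry.right j) • ry.left j) := by
                rw [Finset.mul_sum, map_sum]
                exact Finset.sum_congr rfl fun j _ => by
                  rw [mul_smul_comm, map_smul, smul_eq_mul, mul_comm]
            _ = f (rx.left i * y0) := by rw [sum_smul_counit y0 ry]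
      _ = rActL (k := k) (f ∘ₗ LinearMap.mulRight k y0) x0 := by
          rw [rActL_repr _ _ rx]
          exact Finset.sum_congr rfl fun i _ => by simp
  exact main.symm

end Aux

/-- Let `H` be an FH-algebra over a commutative ring `k` with FH-homomorphism `f` (a Frobenius
homomorphism which is a right integral in `H*`), right norm `t` (so `f (t * a) = ε a` and
`f t = 1`), right modular function `m a = f (a * t)` with convolution inverse `m⁻¹ = m ∘ S`,
inverse antipode `Sinv`, and Nakayama automorphism `η` relative to `f`
(`f (η a * c) = f (c * a)`).  Then `η a = S²(a ↼ m⁻¹) = (S² a) ↼ m⁻¹` and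
`η⁻¹ a = S⁻²(a ↼ m) = (S⁻² a) ↼ m`. -/
theorem stmt_6 (k : Type*) [CommRing k] (H : Type*) [Ring H] [HopfAlgebra k H]
    (hfin : Module.Finite k H) (hproj : Module.Projective k H)
    (f : H →ₗ[k] k) (nn : ℕ) (x y : Fin nn → H) (hsys : IsFrobeniusSystem k H f x y)
    (hri : ∀ a : H,
      (TensorProduct.lid k H) ((TensorProduct.map f LinearMap.id) (Coalgebra.comul (R := k) a))
        = f a • (1 : H))
    (Sinv : H →ₗ[k] H)
    (hS1 : ∀ a : H, Sinv (HopfAlgebra.antipode (R := k) a) = a)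
    (hS2 : ∀ a : H, HopfAlgebra.antipode (R := k) (Sinv a) = a)
    (t : H) (ht : ∀ a : H, f (t * a) = Coalgebra.counit (R := k) a) (hft : f t = 1)
    (m : H →ₗ[k] k) (hm : ∀ a : H, m a = f (a * t))
    (η : H ≃ₐ[k] H) (hη : ∀ a c : H, f (η a * c) = f (c * a)) :
    ∀ a : H,
      η a = HopfAlgebra.antipode (R := k)
          (HopfAlgebra.antipode (R := k) (rAct k H (m ∘ₗ HopfAlgebra.antipode (R := k)) a)) ∧
      η a = rAct k H (m ∘ₗ HopfAlgebra.antipode (R := k))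
          (HopfAlgebra.antipode (R := k) (HopfAlgebra.antipode (R := k) a)) ∧
      η.symm a = Sinv (Sinv (rAct k H m a)) ∧
      η.symm a = rAct k H m (Sinv (Sinv a)) := by
  classical
  intro a
  have hri' : ∀ w : H, rActL (k := k) f w = f w • (1 : H) := fun w =>
    (rActL_apply f w).trans (hri w)
  have hra : ∀ (g : H →ₗ[k] k) (w : H), rAct k H g w = rActL (k := k) g w := fun g w =>
    (rActL_apply g w).symm
  have hm' : m = f ∘ₗ LinearMap.mulRight k t := by
    ext w; simp [hm w]
  have rt : Coalgebra.Repr k t (H × H) := ℛ k t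
  -- (A) : `S w = ∑ f (t₍₁₎ * w) • t₍₂₎`
  have hA : ∀ w : H, HopfAlgebra.antipode (R := k) w
      = ∑ j ∈ rt.index, f (rt.left j * w) • rt.right j := by
    intro w
    have h := star_id f hri' t w
    have hfl : f ∘ₗ LinearMap.mulLeft k t = Coalgebra.counit (R := k) := by
      ext c; simp [ht]
    rw [hfl, rAct_counit] at h
    rw [← h, rActL_repr _ _ rt]
    exact Finset.sum_congr rfl fun j _ => by simp
  have hA' : ∀ w : H, w = ∑ j ∈ rt.index, f (rt.left j * w) • Sinv (rt.right j) := by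
    intro w
    conv_lhs => rw [← hS1 w, hA w]
    rw [map_sum]
    exact Finset.sum_congr rfl fun j _ => by rw [map_smul]
  -- nondegeneracy
  have ndr : ∀ b b' : H, (∀ c, f (b * c) = f (b' * c)) → b = b' := by
    intro b b' h
    calc b = ∑ i, f (b * x i) • y i := ((hsys b).2).symm
      _ = ∑ i, f (b' * x i) • y i := Finset.sum_congr rfl fun i _ => by rw [h (x i)]
      _ = b' := (hsys b').2
  -- (C)
  have hC : ∀ c : H, ∑ j ∈ rt.index, f (c * Sinv (rt.right j)) • rt.left j = c := by
    intro c
    calc ∑ j ∈ rt.index, f (c * Sinv (rt.right j)) • rt.left j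
        = ∑ j ∈ rt.index, f (c * Sinv (rt.right j)) • (∑ i, f (rt.left j * x i) • y i) :=
          Finset.sum_congr rfl fun j _ => by rw [(hsys (rt.left j)).2]
      _ = ∑ j ∈ rt.index, ∑ i, (f (c * Sinv (rt.right j)) * f (rt.left j * x i)) • y i := by
          refine Finset.sum_congr rfl fun j _ => ?_
          rw [Finset.smul_sum]
          exact Finset.sum_congr rfl fun i _ => smul_smul _ _ _
      _ = ∑ i, ∑ j ∈ rt.index, (f (c * Sinv (rt.right j)) * f (rt.left j * x i)) • y i :=
          Finset.sum_comm
      _ = ∑ i, f (c * x i) • y i := by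
          refine Finset.sum_congr rfl fun i _ => ?_
          rw [← Finset.sum_smul]
          congr 1
          calc ∑ j ∈ rt.index, f (c * Sinv (rt.right j)) * f (rt.left j * x i)
              = f (c * ∑ j ∈ rt.index, f (rt.left j * x i) • Sinv (rt.right j)) := by
                rw [Finset.mul_sum, map_sum]
                exact Finset.sum_congr rfl fun j _ => by
                  rw [mul_smul_comm, map_smul, smul_eq_mul, mul_comm]
            _ = f (c * x i) := by rw [← hA' (x i)]
      _ = c := (hsys c).2
  -- (B)
  have hB : ∀ w : H, rActL (k := k) m w
      = ∑ j ∈ rt.index, f (w * rt.left j) • HopfAlgebra.antipode (R := k) (rt.right j) := by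
    intro w
    rw [hm', star_id f hri' w t, rActL_repr _ _ rt, map_sum]
    exact Finset.sum_congr rfl fun j _ => by rw [map_smul]; simp
  have hiiicore : ∀ w c : H, f (c * Sinv (Sinv (rActL (k := k) m w))) = f (w * c) := by
    intro w c
    have h1 : Sinv (Sinv (rActL (k := k) m w))
        = ∑ j ∈ rt.index, f (w * rt.left j) • Sinv (rt.right j) := by
      rw [hB w, map_sum, map_sum]
      refine Finset.sum_congr rfl fun j _ => ?_
      rw [map_smul, map_smul, hS1]
    rw [h1, Finset.mul_sum, map_sum]
    calc ∑ j ∈ rt.index, f (c * (f (w * rt.left j) • Sinv (rt.right j)))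
        = ∑ j ∈ rt.index, f (w * (f (c * Sinv (rt.right j)) • rt.left j)) := by
          refine Finset.sum_congr rfl fun j _ => ?_
          rw [mul_smul_comm, map_smul, mul_smul_comm, map_smul, smul_eq_mul, smul_eq_mul,
            mul_comm]
      _ = f (w * ∑ j ∈ rt.index, f (c * Sinv (rt.right j)) • rt.left j) := by
          rw [Finset.mul_sum, map_sum]
      _ = f (w * c) := by rw [hC c]
  -- third formula
  have hiii : ∀ w : H, η.symm w = Sinv (Sinv (rActL (k := k) m w)) := by
    intro w
    have hXa : η (Sinv (Sinv (rActL (k := k) m w))) = w :=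
      ndr _ _ fun c => (hη _ c).trans (hiiicore w c)
    exact (AlgEquiv.symm_apply_eq η).mpr hXa.symm
  -- `t` is a right integral in `H`
  have hti : ∀ c : H, t * c = Coalgebra.counit (R := k) c • t := by
    intro c
    refine ndr _ _ fun c' => ?_
    rw [mul_assoc, ht, Bialgebra.counit_mul, smul_mul_assoc, map_smul, ht, smul_eq_mul]
  have hat : ∀ w : H, w * t = m w • t := by
    intro w
    refine ndr _ _ fun c' => ?_
    calc f (w * t * c') = Coalgebra.counit (R := k) c' * m w := by
          rw [mul_assoc, hti c', mul_smul_comm, map_smul, smul_eq_mul, ← hm w]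
      _ = f ((m w • t) * c') := by
          rw [smul_mul_assoc, map_smul, smul_eq_mul, ht c', mul_comm]
  have hmmul : ∀ u v : H, m (u * v) = m u * m v := by
    intro u v
    calc m (u * v) = f (u * (v * t)) := by rw [hm (u * v), mul_assoc]
      _ = m v * m u := by rw [hat v, mul_smul_comm, map_smul, smul_eq_mul, ← hm u]
      _ = m u * m v := mul_comm _ _
  have hm1 : m 1 = 1 := by rw [hm 1, one_mul, hft]
  -- convolution identities
  have hc1 : mconv (k := k) m (m ∘ₗ HopfAlgebra.antipode (R := k))
      = Coalgebra.counit (R := k) := by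
    ext w
    rw [mconv_repr _ _ w (ℛ k w)]
    simp only [LinearMap.comp_apply]
    calc ∑ i ∈ (ℛ k w).index, m ((ℛ k w).left i) *
          m (HopfAlgebra.antipode (R := k) ((ℛ k w).right i))
        = m (∑ i ∈ (ℛ k w).index, (ℛ k w).left i *
            HopfAlgebra.antipode (R := k) ((ℛ k w).right i)) := by
          rw [map_sum]
          exact Finset.sum_congr rfl fun i _ => (hmmul _ _).symm
      _ = Coalgebra.counit (R := k) w := by
          rw [sum_mul_antipode_eq_smul (ℛ k w), map_smul, hm1, smul_eq_mul, mul_one]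
  have hc2 : mconv (k := k) (m ∘ₗ HopfAlgebra.antipode (R := k)) m
      = Coalgebra.counit (R := k) := by
    ext w
    rw [mconv_repr _ _ w (ℛ k w)]
    simp only [LinearMap.comp_apply]
    calc ∑ i ∈ (ℛ k w).index, m (HopfAlgebra.antipode (R := k) ((ℛ k w).left i)) *
          m ((ℛ k w).right i)
        = m (∑ i ∈ (ℛ k w).index, HopfAlgebra.antipode (R := k) ((ℛ k w).left i) *
            (ℛ k w).right i) := by
          rw [map_sum]
          exact Finset.sum_congr rfl fun i _ => (hmmul _ _).symm
      _ = Coalgebra.counit (R := k) w := by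
          rw [sum_antipode_mul_eq_smul (ℛ k w), map_smul, hm1, smul_eq_mul, mul_one]
  have hc3 : mconv (k := k)
      (m ∘ₗ HopfAlgebra.antipode (R := k) ∘ₗ HopfAlgebra.antipode (R := k))
      (m ∘ₗ HopfAlgebra.antipode (R := k)) = Coalgebra.counit (R := k) := by
    ext w
    rw [mconv_repr _ _ w (ℛ k w)]
    simp only [LinearMap.comp_apply]
    calc ∑ i ∈ (ℛ k w).index,
          m (HopfAlgebra.antipode (R := k) (HopfAlgebra.antipode (R := k) ((ℛ k w).left i))) *
            m (HopfAlgebra.antipode (R := k) ((ℛ k w).right i))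
        = m (HopfAlgebra.antipode (R := k)
            (∑ i ∈ (ℛ k w).index, HopfAlgebra.antipode (R := k) ((ℛ k w).left i) *
              (ℛ k w).right i)) := by
          rw [map_sum, map_sum]
          refine Finset.sum_congr rfl fun i _ => ?_
          rw [antipode_mul', hmmul]
          exact mul_comm _ _
      _ = Coalgebra.counit (R := k) w := by
          rw [sum_antipode_mul_eq_smul (ℛ k w), map_smul, map_smul, antipode_one', hm1,
            smul_eq_mul, mul_one]
  have hmS2 : m ∘ₗ HopfAlgebra.antipode (R := k) ∘ₗ HopfAlgebra.antipode (R := k) = m := by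
    calc m ∘ₗ HopfAlgebra.antipode (R := k) ∘ₗ HopfAlgebra.antipode (R := k)
        = mconv (k := k)
            (m ∘ₗ HopfAlgebra.antipode (R := k) ∘ₗ HopfAlgebra.antipode (R := k))
            (Coalgebra.counit (R := k)) := (mconv_counit_right _).symm
      _ = mconv (k := k)
            (m ∘ₗ HopfAlgebra.antipode (R := k) ∘ₗ HopfAlgebra.antipode (R := k))
            (mconv (k := k) (m ∘ₗ HopfAlgebra.antipode (R := k)) m) := by rw [hc2]
      _ = mconv (k := k)
            (mconv (k := k)
              (m ∘ₗ HopfAlgebra.antipode (R := k) ∘ₗ HopfAlgebra.antipode (R := k))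
              (m ∘ₗ HopfAlgebra.antipode (R := k))) m := (mconv_assoc _ _ _).symm
      _ = mconv (k := k) (Coalgebra.counit (R := k)) m := by rw [hc3]
      _ = m := mconv_counit_left m
  have hCV1 : ∀ w : H,
      rActL (k := k) (m ∘ₗ HopfAlgebra.antipode (R := k)) (rActL (k := k) m w) = w := by
    intro w
    rw [rActL_rActL, hc1, rAct_counit]
  -- inverse antipode is an anti-coalgebra morphism
  have hSinvS : ∀ X : H ⊗[k] H,
      TensorProduct.map Sinv Sinv (TensorProduct.map (HopfAlgebra.antipode (R := k))
        (HopfAlgebra.antipode (R := k)) X) = X := by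
    intro X
    induction X using TensorProduct.induction_on with
    | zero => simp
    | tmul u v => simp [hS1]
    | add u v hu hv => rw [map_add, map_add, hu, hv]
  have hcomulSinv : ∀ w : H, Coalgebra.comul (R := k) (Sinv w)
      = TensorProduct.map Sinv Sinv
          ((TensorProduct.comm k H H) (Coalgebra.comul (R := k) w)) := by
    intro w
    have h := comul_antipode' (k := k) (Sinv w)
    rw [hS2 w, Kmap_apply] at h
    rw [h, comm_comm', hSinvS]
  have hmSinv2 : ∀ w : H, m (Sinv (Sinv w)) = m w := by
    intro w
    have h := LinearMap.congr_fun hmS2 (Sinv (Sinv w))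
    simp only [LinearMap.comp_apply] at h
    rw [hS2, hS2] at h
    exact h.symm
  have hcomm23 : ∀ w : H,
      rActL (k := k) m (Sinv (Sinv w)) = Sinv (Sinv (rActL (k := k) m w)) := by
    intro w
    have hcs2 : Coalgebra.comul (R := k) (Sinv (Sinv w))
        = TensorProduct.map Sinv Sinv (TensorProduct.map Sinv Sinv
            (Coalgebra.comul (R := k) w)) := by
      rw [hcomulSinv (Sinv w), hcomulSinv w, comm_map', comm_comm']
    have hgen : ∀ X : H ⊗[k] H,
        (TensorProduct.lid k H) ((TensorProduct.map m LinearMap.id)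
          (TensorProduct.map Sinv Sinv (TensorProduct.map Sinv Sinv X)))
        = Sinv (Sinv ((TensorProduct.lid k H) ((TensorProduct.map m LinearMap.id) X))) := by
      intro X
      induction X using TensorProduct.induction_on with
      | zero => simp
      | tmul u v => simp [hmSinv2 u]
      | add u v hu hv => simp only [map_add, hu, hv]
    rw [rActL_apply, hcs2, hgen, ← rActL_apply]
  -- fourth formula
  have hiv : ∀ w : H, η.symm w = rActL (k := k) m (Sinv (Sinv w)) := fun w => by
    rw [hcomm23, hiii]
  -- second formula
  have hii : ∀ w : H, η w = rActL (k := k) (m ∘ₗ HopfAlgebra.antipode (R := k))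
      (HopfAlgebra.antipode (R := k) (HopfAlgebra.antipode (R := k) w)) := by
    intro w
    have h1 := hiii (η w)
    rw [AlgEquiv.symm_apply_apply] at h1
    have h2 : HopfAlgebra.antipode (R := k) (HopfAlgebra.antipode (R := k) w)
        = rActL (k := k) m (η w) := by
      conv_lhs => rw [h1]
      rw [hS2, hS2]
    rw [h2]
    exact (hCV1 (η w)).symm
  -- first formula
  have hi : ∀ w : H, η w = HopfAlgebra.antipode (R := k) (HopfAlgebra.antipode (R := k)
      (rActL (k := k) (m ∘ₗ HopfAlgebra.antipode (R := k)) w)) := by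
    intro w
    have h1 := hiv (η w)
    rw [AlgEquiv.symm_apply_apply] at h1
    have h2 : rActL (k := k) (m ∘ₗ HopfAlgebra.antipode (R := k)) w = Sinv (Sinv (η w)) := by
      conv_lhs => rw [h1]
      exact hCV1 _
    rw [h2, hS2, hS2]
  refine ⟨?_, ?_, ?_, ?_⟩
  · rw [hra]; exact hi a
  · rw [hra]; exact hii a
  · rw [hra]; exact hiii a
  · rw [hra]; exact hiv a
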